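/- Let ℓ be a prime and let M ∈ GSp₄(F_ℓ) satisfy tr(M) = 0. Then the characteristic polynomial of M is reducible over F_ℓ, i.e., it is a product of two nonconstant polynomials in F_ℓ[t]. -/

import Mathlib

open Matrix Polynomial

/-- The standard symplectic form `[[0, I₂], [−I₂, 0]]` on `F⁴`. -/
def J4 (F : Type*) [CommRing F] : Matrix (Fin 4) (Fin 4) F :=
  !![0, 0, 1, 0;
     0, 0, 0, 1;
     -1, 0, 0, 0;
     0, -1, 0, 0]

/-- If `ℓ` is a prime and `M ∈ GSp₄(F_ℓ)` has trace `0`, then the characteristic polynomial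
of `M` is a product of two nonconstant polynomials over `F_ℓ`. -/
theorem charpoly_reducible_of_trace_zero (ℓ : ℕ) [Fact ℓ.Prime]
    (M : Matrix (Fin 4) (Fin 4) (ZMod ℓ)) (μ : ZMod ℓ)
    (hM : IsUnit M.det) (hμ : μ ≠ 0)
    (hsymp : Mᵀ * J4 (ZMod ℓ) * M = μ • J4 (ZMod ℓ))
    (htr : M.trace = 0) :
    ∃ f g : Polynomial (ZMod ℓ), 0 < f.degree ∧ 0 < g.degree ∧ M.charpoly = f * g := by
  haveI : NeZero ℓ := ⟨(Fact.out (p := ℓ.Prime)).ne_zero⟩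
  -- `J4 * J4 = -1`
  have hJJ : J4 (ZMod ℓ) * J4 (ZMod ℓ) = -1 := by
    ext i j
    fin_cases i <;> fin_cases j <;>
      simp [J4, Matrix.mul_apply, Fin.sum_univ_four, Matrix.one_apply,
        Matrix.vecHead, Matrix.vecTail]
  have hMM : M * M⁻¹ = 1 := Matrix.mul_nonsing_inv M hM
  -- `M⁻¹` in terms of `Mᵀ`
  have h1 : Mᵀ * J4 (ZMod ℓ) = μ • (J4 (ZMod ℓ) * M⁻¹) := by
    calc Mᵀ * J4 (ZMod ℓ) = (Mᵀ * J4 (ZMod ℓ) * M) * M⁻¹ := by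
          rw [Matrix.mul_assoc, hMM, Matrix.mul_one]
      _ = μ • (J4 (ZMod ℓ) * M⁻¹) := by rw [hsymp, Matrix.smul_mul]
  have h2 : J4 (ZMod ℓ) * Mᵀ * J4 (ZMod ℓ) = (-μ) • M⁻¹ := by
    rw [Matrix.mul_assoc, h1, Matrix.mul_smul, ← Matrix.mul_assoc, hJJ]
    simp [smul_neg, neg_smul]
  -- the trace of `M⁻¹` vanishes
  have htrinv : (M⁻¹).trace = 0 := by
    have h3 := congrArg Matrix.trace h2
    rw [Matrix.trace_smul, Matrix.mul_assoc, Matrix.trace_mul_comm (J4 (ZMod ℓ)),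
      Matrix.mul_assoc, hJJ] at h3
    simp [Matrix.trace_transpose, htr] at h3
    rcases h3.symm with h | h
    · exact h
    · exact absurd h hμ
  -- the determinant of `M` is `μ ^ 2` (Pfaffian identity)
  have hdet : M.det = μ ^ 2 := by
    have h01 := congrFun (congrFun hsymp 0) 1
    have h02 := congrFun (congrFun hsymp 0) 2
    have h03 := congrFun (congrFun hsymp 0) 3
    have h13 := congrFun (congrFun hsymp 1) 3
    simp [Matrix.mul_apply, Fin.sum_univ_four, J4, Matrix.transpose_apply] at h01 h02 h03 h13
    simp [Matrix.det_succ_row_zero, Fin.sum_univ_succ,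
      show Fin.succ (2:Fin 3) = 3 by decide,
      show Fin.succAbove (2:Fin 4) (2:Fin 3) = 3 by decide,
      show Fin.succAbove (1:Fin 4) (2:Fin 3) = 3 by decide,
      show Fin.castSucc (2:Fin 3) = 2 by decide,
      show Fin.succAbove (3:Fin 4) (2:Fin 3) = 2 by decide]
    linear_combination (-(M 0 2 * M 2 3 + M 1 2 * M 3 3 - M 2 2 * M 0 3 - M 3 2 * M 1 3)) * h01 +
      (-(M 0 1 * M 2 2 + M 1 1 * M 3 2 - M 2 1 * M 0 2 - M 3 1 * M 1 2)) * h03 +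
      (M 0 1 * M 2 3 + M 1 1 * M 3 3 - M 2 1 * M 0 3 - M 3 1 * M 1 3) * h02 + μ * h13
  -- the reversed characteristic polynomial of `M`
  have key : (1 : Matrix (Fin 4) (Fin 4) (Polynomial (ZMod ℓ))) -
      (X : Polynomial (ZMod ℓ)) • M.map C = M.map C * (-(charmatrix M⁻¹)) := by
    rw [charmatrix, Matrix.mul_neg, Matrix.mul_sub, neg_sub]
    congr 1
    · rw [RingHom.mapMatrix_apply, ← Matrix.map_mul, hMM, Matrix.map_one _ (map_zero C) (map_one C)]
    · rw [Matrix.scalar_apply, ← Matrix.smul_one_eq_diagonal, Matrix.mul_smul, Matrix.mul_one]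
  have hrev : M.charpolyRev = C M.det * (M⁻¹).charpoly := by
    rw [Matrix.charpolyRev, key, Matrix.det_mul, Matrix.det_neg, ← Matrix.charpoly]
    rw [show M.map ⇑C = (C : ZMod ℓ →+* Polynomial (ZMod ℓ)).mapMatrix M from rfl,
      ← RingHom.map_det, Fintype.card_fin]
    norm_num
  -- the coefficients of the characteristic polynomial
  have hdeg : M.charpoly.natDegree = 4 := by
    rw [Matrix.charpoly_natDegree_eq_dim, Fintype.card_fin]
  have hc3 : M.charpoly.coeff 3 = 0 := by
    have := M.trace_eq_neg_charpoly_coeff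
    rw [htr, Fintype.card_fin] at this
    norm_num at this
    exact this
  have hc0 : M.charpoly.coeff 0 = μ ^ 2 := by
    have := M.det_eq_sign_charpoly_coeff
    rw [hdet, Fintype.card_fin] at this
    norm_num at this
    exact this.symm
  have hc1 : M.charpoly.coeff 1 = 0 := by
    have h3 := Polynomial.coeff_reverse M.charpoly 3
    rw [M.reverse_charpoly, hdeg, Polynomial.revAt_le (by norm_num), hrev] at h3
    have h4 := (M⁻¹).trace_eq_neg_charpoly_coeff
    rw [htrinv, Fintype.card_fin] at h4
    norm_num at h3 h4
    rw [h4, mul_zero] at h3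
    exact h3.symm
  have hc4 : M.charpoly.coeff 4 = 1 := by
    have := M.charpoly_monic
    rw [Polynomial.Monic, Polynomial.leadingCoeff, hdeg] at this
    exact this
  set b := M.charpoly.coeff 2 with hb2
  have hp : M.charpoly = X ^ 4 + C b * X ^ 2 + C (μ ^ 2) := by
    ext n
    match n with
    | 0 => simp [hc0, coeff_X_pow, coeff_C, -map_pow]
    | 1 => simp [hc1, coeff_X_pow, coeff_C, -map_pow]
    | 2 => simp [hb2, coeff_X_pow, coeff_C, -map_pow]
    | 3 => simp [hc3, coeff_X_pow, coeff_C, -map_pow]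
    | 4 => simp [hc4, coeff_X_pow, coeff_C, -map_pow]
    | (n+5) =>
      rw [Polynomial.coeff_eq_zero_of_natDegree_lt (by rw [hdeg]; omega)]
      simp [coeff_X_pow, coeff_C, -map_pow]
  rw [hp]
  clear_value b
  -- now factor `X ^ 4 + b X ^ 2 + μ ^ 2`
  by_cases h1 : IsSquare (2 * μ - b)
  · obtain ⟨c, hc⟩ := h1
    refine ⟨X ^ 2 + C c * X + C μ, X ^ 2 - C c * X + C μ, ?_, ?_, ?_⟩
    · have hd : (X ^ 2 + C c * X + C μ : Polynomial (ZMod ℓ)).degree = 2 := by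
        compute_degree!
      rw [hd]; norm_num
    · have hd : (X ^ 2 - C c * X + C μ : Polynomial (ZMod ℓ)).degree = 2 := by
        compute_degree!
      rw [hd]; norm_num
    · have hcc : C c * C c = 2 * C μ - C b := by
        rw [← _root_.map_mul, ← hc]
        simp [map_sub, _root_.map_mul, map_ofNat]
      have hμμ : C (μ ^ 2) = C μ * C μ := by rw [← _root_.map_mul, ← pow_two]
      linear_combination (X ^ 2 : Polynomial (ZMod ℓ)) * hcc + hμμ
  · by_cases h2 : IsSquare (-2 * μ - b)
    · obtain ⟨c, hc⟩ := h2
      refine ⟨X ^ 2 + C c * X - C μ, X ^ 2 - C c * X - C μ, ?_, ?_, ?_⟩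
      · have hd : (X ^ 2 + C c * X - C μ : Polynomial (ZMod ℓ)).degree = 2 := by
          compute_degree!
        rw [hd]; norm_num
      · have hd : (X ^ 2 - C c * X - C μ : Polynomial (ZMod ℓ)).degree = 2 := by
          compute_degree!
        rw [hd]; norm_num
      · have hcc : C c * C c = -(2 * C μ) - C b := by
          rw [← _root_.map_mul, ← hc]
          simp [map_sub, map_neg, _root_.map_mul, map_ofNat]
        have hμμ : C (μ ^ 2) = C μ * C μ := by rw [← _root_.map_mul, ← pow_two]
        linear_combination (X ^ 2 : Polynomial (ZMod ℓ)) * hcc + hμμ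
    · -- both are nonsquares, so their product is a square
      have hℓ2 : ℓ ≠ 2 := by
        intro h
        subst h
        exact h1 ((fun x => ⟨x, by fin_cases x <;> rfl⟩ : ∀ x : ZMod 2, IsSquare x) _)
      have h2ne : (2 : ZMod ℓ) ≠ 0 := by
        intro h
        have h' : ((2 : ℕ) : ZMod ℓ) = 0 := by push_cast; exact h
        have := (ZMod.natCast_eq_zero_iff 2 ℓ).mp h'
        exact hℓ2 ((Nat.prime_dvd_prime_iff_eq (Fact.out (p := ℓ.Prime)) Nat.prime_two).mp this)
      have ha : 2 * μ - b ≠ 0 := fun h => h1 (h ▸ ⟨0, by ring⟩)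
      have hbne : -2 * μ - b ≠ 0 := fun h => h2 (h ▸ ⟨0, by ring⟩)
      have hx := quadraticChar_neg_one_iff_not_isSquare.mpr h1
      have hy := quadraticChar_neg_one_iff_not_isSquare.mpr h2
      have hxy : quadraticChar (ZMod ℓ) ((2 * μ - b) * (-2 * μ - b)) = 1 := by
        rw [_root_.map_mul, hx, hy]; ring
      obtain ⟨d, hd⟩ :=
        (quadraticChar_one_iff_isSquare (mul_ne_zero ha hbne)).mp hxy
      have hr : (d - b) / 2 + (-d - b) / 2 = -b := by field_simp; ring
      have hrs : (d - b) / 2 * ((-d - b) / 2) = μ ^ 2 := by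
        field_simp
        linear_combination hd
      refine ⟨X ^ 2 - C ((d - b) / 2), X ^ 2 - C ((-d - b) / 2), ?_, ?_, ?_⟩
      · have hde : (X ^ 2 - C ((d - b) / 2) : Polynomial (ZMod ℓ)).degree = 2 := by
          compute_degree!
        rw [hde]; norm_num
      · have hde : (X ^ 2 - C ((-d - b) / 2) : Polynomial (ZMod ℓ)).degree = 2 := by
          compute_degree!
        rw [hde]; norm_num
      · have hr' : C ((d - b) / 2) + C ((-d - b) / 2) = -C b := by
          rw [← _root_.map_add, hr, map_neg]
        have hrs' : C ((d - b) / 2) * C ((-d - b) / 2) = C (μ ^ 2) := by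
          rw [← _root_.map_mul, hrs]
        linear_combination (X ^ 2 : Polynomial (ZMod ℓ)) * hr' - hrs'
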